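/- arXiv:1905.00113 — 3 statements merged into one kernel-verified Lean document; each statement's English description precedes it below -/
import Mathlib

section
/- Let Φ be a frame for H with lower bound m_Φ, and suppose Ψ is c-quadratically close to Φ with q₀ < 1 (so Ψ is a frame). Then max{δ(R(U_Φ), R(U_Ψ)), δ(R(U_Ψ), R(U_Φ))} ≤ (1/(1 − q₀)) · √(q/m_Φ), where δ denotes the gap between closed subspaces. -/
open ContinuousLinearMap MeasureTheory
open scoped InnerProductSpace ComplexConjugate

noncomputable section

notation "ℓ²" => lp (fun _ : ℕ => ℂ) 2

variable {H : Type} [NormedAddCommGroup H] [InnerProductSpace ℂ H] [CompleteSpace H]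

/-- `Φ = (φₙ)` is a frame for `H` with lower bound `m` and upper bound `M`. -/
def IsFrame (φ : ℕ → H) (m M : ℝ) : Prop :=
  0 < m ∧ 0 < M ∧ ∀ f : H,
    m * ‖f‖ ^ 2 ≤ ∑' n, ‖(inner ℂ (φ n) f : ℂ)‖ ^ 2 ∧
    ∑' n, ‖(inner ℂ (φ n) f : ℂ)‖ ^ 2 ≤ M * ‖f‖ ^ 2

/-- `Φ = (φₙ)` is a Bessel sequence with bound `M`. -/
def IsBessel (φ : ℕ → H) (M : ℝ) : Prop :=
  0 < M ∧ ∀ f : H, ∑' n, ‖(inner ℂ (φ n) f : ℂ)‖ ^ 2 ≤ M * ‖f‖ ^ 2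

/-- `U` is the analysis operator of the sequence `Φ = (φₙ)`, i.e. `U f = (⟨f, φₙ⟩)ₙ`. -/
def IsAnalysis (φ : ℕ → H) (U : H →L[ℂ] ℓ²) : Prop :=
  ∀ (f : H) (n : ℕ), U f n = (inner ℂ (φ n) f : ℂ)

/-- Orthogonal projection onto a closed submodule, as an endomorphism. -/
def orthProj {E : Type} [NormedAddCommGroup E] [InnerProductSpace ℂ E] [CompleteSpace E]
    (K : Submodule ℂ E) (hK : IsClosed (K : Set E)) : E →L[ℂ] E :=
  haveI := hK.completeSpace_coe
  K.subtypeL.comp (K.orthogonalProjectionOnto)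

/-- Orthogonal projection onto a closed submodule, with values in the submodule. -/
def orthProjTo {E : Type} [NormedAddCommGroup E] [InnerProductSpace ℂ E] [CompleteSpace E]
    (K : Submodule ℂ E) (hK : IsClosed (K : Set E)) : E →L[ℂ] K :=
  haveI := hK.completeSpace_coe
  K.orthogonalProjectionOnto

/-- The gap `δ(X, Y) = ‖(Id - P_Y)|_X‖` from `X` to a closed subspace `Y`. -/
def gap {E : Type} [NormedAddCommGroup E] [InnerProductSpace ℂ E] [CompleteSpace E]
    (X Y : Submodule ℂ E) (hY : IsClosed (Y : Set E)) : ℝ :=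
  ‖(ContinuousLinearMap.id ℂ E - orthProj Y hY).comp X.subtypeL‖

lemma sq_le_imp {a b : ℝ} (ha : 0 ≤ a) (hb : 0 ≤ b) (h : a ^ 2 ≤ b ^ 2) : a ≤ b := by
  nlinarith

lemma l2_norm_sq (x : ℓ²) : ‖x‖ ^ 2 = ∑' n, ‖x n‖ ^ 2 := by
  have h := lp.norm_rpow_eq_tsum (p := 2) (E := fun _ : ℕ => ℂ) (by norm_num) x
  rw [show ((2:ENNReal)).toReal = ((2:ℕ):ℝ) by norm_num] at h
  simpa [Real.rpow_natCast] using h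

lemma orthProj_dist_le {E : Type} [NormedAddCommGroup E] [InnerProductSpace ℂ E] [CompleteSpace E]
    (K : Submodule ℂ E) (hK : IsClosed (K : Set E)) (v y : E) (hy : y ∈ K) :
    ‖v - orthProj K hK v‖ ≤ ‖v - y‖ := by
  haveI := hK.completeSpace_coe
  have h0 : orthProj K hK v = K.starProjection v := rfl
  rw [h0, Submodule.starProjection_minimal]
  refine ciInf_le ⟨0, ?_⟩ (⟨y, hy⟩ : K)
  rintro a ⟨x, rfl⟩
  positivity

lemma gap_le_of_forall {E : Type} [NormedAddCommGroup E] [InnerProductSpace ℂ E] [CompleteSpace E]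
    (X Y : Submodule ℂ E) (hY : IsClosed (Y : Set E)) (C : ℝ) (hC : 0 ≤ C)
    (h : ∀ v ∈ X, ‖v - orthProj Y hY v‖ ≤ C * ‖v‖) :
    gap X.topologicalClosure Y hY ≤ C := by
  unfold gap
  apply ContinuousLinearMap.opNorm_le_bound _ hC
  rintro ⟨x, hx⟩
  have hsub : closure (X : Set E) ⊆ {v : E | ‖v - orthProj Y hY v‖ ≤ C * ‖v‖} := by
    apply closure_minimal h
    exact isClosed_le ((continuous_id.sub (orthProj Y hY).continuous).norm)
      (continuous_const.mul continuous_norm)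
  have hx' : x ∈ closure (X : Set E) := by
    rwa [← Submodule.topologicalClosure_coe]
  have := hsub hx'
  simpa using this


set_option maxHeartbeats 1600000 in
theorem stmt3
    (φ ψ : ℕ → H) (mΦ MΦ q q0 : ℝ)
    (UΦ UΨ : H →L[ℂ] ℓ²) (TΦ : ℓ² →L[ℂ] H) (SΦ SΦinv : H →L[ℂ] H)
    (hUΦ : IsAnalysis φ UΦ) (hUΨ : IsAnalysis ψ UΨ)
    (hTΦ : TΦ = adjoint UΦ) (hSΦ : SΦ = TΦ ∘L UΦ)
    (hinv1 : SΦ ∘L SΦinv = ContinuousLinearMap.id ℂ H)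
    (hinv2 : SΦinv ∘L SΦ = ContinuousLinearMap.id ℂ H)
    (hΦ : IsFrame φ mΦ MΦ)
    (hqs : Summable fun n => ‖φ n - ψ n‖ ^ 2)
    (hq : q = ∑' n, ‖φ n - ψ n‖ ^ 2)
    (hq0s : Summable fun n => ‖φ n - ψ n‖ * ‖SΦinv (φ n)‖)
    (hq0 : q0 = ∑' n, ‖φ n - ψ n‖ * ‖SΦinv (φ n)‖)
    (hq0lt : q0 < 1) :
    max
      (gap ((LinearMap.range (UΦ : H →ₗ[ℂ] ℓ²)).topologicalClosure) ((LinearMap.range (UΨ : H →ₗ[ℂ] ℓ²)).topologicalClosure)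
        (Submodule.isClosed_topologicalClosure _))
      (gap ((LinearMap.range (UΨ : H →ₗ[ℂ] ℓ²)).topologicalClosure) ((LinearMap.range (UΦ : H →ₗ[ℂ] ℓ²)).topologicalClosure)
        (Submodule.isClosed_topologicalClosure _))
      ≤ (1 / (1 - q0)) * Real.sqrt (q / mΦ) := by
  -- unfolded analysis hypotheses
  have hUΦ' : ∀ (f : H) (n : ℕ), UΦ f n = (inner ℂ (φ n) f : ℂ) := hUΦ
  have hUΨ' : ∀ (f : H) (n : ℕ), UΨ f n = (inner ℂ (ψ n) f : ℂ) := hUΨ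
  -- basic positivity facts
  have hm : 0 < mΦ := hΦ.1
  have hq0nn : 0 ≤ q0 := by
    rw [hq0]; exact tsum_nonneg fun n => by positivity
  have hqnn : 0 ≤ q := by
    rw [hq]; exact tsum_nonneg fun n => by positivity
  have h1q : 0 < 1 - q0 := by linarith
  -- operator identities
  have hSapp : ∀ h : H, adjoint UΦ (UΦ h) = SΦ h := by
    intro h; rw [hSΦ, hTΦ]; rfl
  have hSS1 : ∀ f : H, SΦ (SΦinv f) = f := by
    intro f; have := ContinuousLinearMap.ext_iff.mp hinv1 f; simpa using this
  have hSS2 : ∀ f : H, SΦinv (SΦ f) = f := by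
    intro f; have := ContinuousLinearMap.ext_iff.mp hinv2 f; simpa using this
  have hsadj : adjoint SΦ = SΦ := by
    rw [hSΦ, hTΦ, adjoint_comp, adjoint_adjoint]
  have hinvadj : adjoint SΦinv = SΦinv := by
    have h1 : adjoint SΦinv ∘L SΦ = ContinuousLinearMap.id ℂ H := by
      rw [← hsadj, ← adjoint_comp, hinv1, adjoint_id]
    calc adjoint SΦinv = adjoint SΦinv ∘L (SΦ ∘L SΦinv) := by
          rw [hinv1, ContinuousLinearMap.comp_id]
      _ = (adjoint SΦinv ∘L SΦ) ∘L SΦinv := by rw [ContinuousLinearMap.comp_assoc]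
      _ = SΦinv := by rw [h1, ContinuousLinearMap.id_comp]
  have hSinner : ∀ (x v : H), (inner ℂ (SΦinv x) v : ℂ) = inner ℂ x (SΦinv v) := by
    intro x v
    conv_lhs => rw [← hinvadj]
    exact adjoint_inner_left SΦinv v x
  -- frame lower bound for UΦ
  have hlow : ∀ f : H, mΦ * ‖f‖ ^ 2 ≤ ‖UΦ f‖ ^ 2 := by
    intro f
    rw [l2_norm_sq]
    simp only [hUΦ']
    exact (hΦ.2.2 f).1
  have hΦlow : ∀ f : H, Real.sqrt mΦ * ‖f‖ ≤ ‖UΦ f‖ := by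
    intro f
    refine sq_le_imp (by positivity) (norm_nonneg _) ?_
    rw [mul_pow, Real.sq_sqrt hm.le]
    exact hlow f
  -- norm of UΦ h via the inner ℂ product with SΦ h
  have hUnormsq : ∀ h : H, ‖UΦ h‖ ^ 2 = RCLike.re (inner ℂ (SΦ h) h : ℂ) := by
    intro h
    rw [← inner_self_eq_norm_sq (𝕜 := ℂ)]
    have h1 := adjoint_inner_left UΦ h (UΦ h)
    rw [hSapp] at h1
    rw [← h1]
  -- mΦ ‖h‖ ≤ ‖SΦ h‖, hence mΦ ‖SΦinv f‖ ≤ ‖f‖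
  have hSlower : ∀ h : H, mΦ * ‖h‖ ≤ ‖SΦ h‖ := by
    intro h
    rcases eq_or_ne ‖h‖ 0 with h0 | h0
    · rw [h0, mul_zero]; positivity
    · have hpos : 0 < ‖h‖ := lt_of_le_of_ne (norm_nonneg _) (Ne.symm h0)
      have h1 := hlow h
      rw [hUnormsq h] at h1
      have h2 : RCLike.re (inner ℂ (SΦ h) h : ℂ) ≤ ‖SΦ h‖ * ‖h‖ :=
        (RCLike.re_le_norm _).trans (norm_inner_le_norm _ _)
      nlinarith
  have hSinvnorm : ∀ f : H, mΦ * ‖SΦinv f‖ ≤ ‖f‖ := by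
    intro f
    have := hSlower (SΦinv f)
    rwa [hSS1 f] at this
  -- √mΦ ‖UΦ (SΦinv f)‖ ≤ ‖f‖
  have hUSinv : ∀ f : H, Real.sqrt mΦ * ‖UΦ (SΦinv f)‖ ≤ ‖f‖ := by
    intro f
    refine sq_le_imp (by positivity) (norm_nonneg _) ?_
    rw [mul_pow, Real.sq_sqrt hm.le, hUnormsq, hSS1 f]
    have h2 : RCLike.re (inner ℂ f (SΦinv f) : ℂ) ≤ ‖f‖ * ‖SΦinv f‖ :=
      (RCLike.re_le_norm _).trans (norm_inner_le_norm _ _)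
    have h3 := hSinvnorm f
    nlinarith [norm_nonneg f, norm_nonneg (SΦinv f)]
  -- √mΦ ‖SΦinv (UΦ† c)‖ ≤ ‖c‖
  have hSinvT : ∀ c : ℓ², Real.sqrt mΦ * ‖SΦinv (adjoint UΦ c)‖ ≤ ‖c‖ := by
    intro c
    have h1 : ‖SΦinv (adjoint UΦ c)‖ ^ 2
        = RCLike.re (inner ℂ c (UΦ (SΦinv (SΦinv (adjoint UΦ c)))) : ℂ) := by
      rw [← inner_self_eq_norm_sq (𝕜 := ℂ), hSinner, adjoint_inner_left]
    have h2 : RCLike.re (inner ℂ c (UΦ (SΦinv (SΦinv (adjoint UΦ c)))) : ℂ)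
        ≤ ‖c‖ * ‖UΦ (SΦinv (SΦinv (adjoint UΦ c)))‖ :=
      (RCLike.re_le_norm _).trans (norm_inner_le_norm _ _)
    have h3 := hUSinv (SΦinv (adjoint UΦ c))
    have hs : 0 ≤ Real.sqrt mΦ := Real.sqrt_nonneg _
    rcases eq_or_ne ‖SΦinv (adjoint UΦ c)‖ 0 with h0 | h0
    · rw [h0, mul_zero]; positivity
    · have hpos : 0 < ‖SΦinv (adjoint UΦ c)‖ :=
        lt_of_le_of_ne (norm_nonneg _) (Ne.symm h0)
      nlinarith [norm_nonneg c]
  -- coordinates of (UΦ - UΨ) u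
  have hD : ∀ (u : H) (n : ℕ), ((UΦ - UΨ) u) n = (inner ℂ (φ n - ψ n) u : ℂ) := by
    intro u n
    rw [ContinuousLinearMap.sub_apply]
    have h1 : (UΦ u - UΨ u) n = UΦ u n - UΨ u n :=
      congrFun (lp.coeFn_sub (UΦ u) (UΨ u)) n
    rw [h1, hUΦ', hUΨ', inner_sub_left]
  -- ‖(UΦ - UΨ) u‖ ≤ √q ‖u‖
  have hDnorm : ∀ u : H, ‖(UΦ - UΨ) u‖ ≤ Real.sqrt q * ‖u‖ := by
    intro u
    refine sq_le_imp (norm_nonneg _) (by positivity) ?_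
    rw [mul_pow, Real.sq_sqrt hqnn, l2_norm_sq]
    have hterm : ∀ n : ℕ, ‖((UΦ - UΨ) u) n‖ ^ 2 ≤ ‖φ n - ψ n‖ ^ 2 * ‖u‖ ^ 2 := by
      intro n
      rw [hD u n, ← mul_pow]
      exact pow_le_pow_left₀ (norm_nonneg _) (norm_inner_le_norm _ _) 2
    calc ∑' n, ‖((UΦ - UΨ) u) n‖ ^ 2
        ≤ ∑' n, ‖φ n - ψ n‖ ^ 2 * ‖u‖ ^ 2 :=
          Summable.tsum_le_tsum hterm
            (Summable.of_nonneg_of_le (fun n => by positivity) hterm (hqs.mul_right _))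
            (hqs.mul_right _)
      _ = q * ‖u‖ ^ 2 := by rw [tsum_mul_right, hq]
  -- key bilinear estimate
  have hK : ∀ u v : H, ‖(inner ℂ ((UΦ - UΨ) u) (UΦ (SΦinv v)) : ℂ)‖ ≤ q0 * ‖u‖ * ‖v‖ := by
    intro u v
    rw [lp.inner_eq_tsum]
    have hterm : ∀ n : ℕ, ‖(inner ℂ (((UΦ - UΨ) u) n) ((UΦ (SΦinv v)) n) : ℂ)‖ ≤
        ‖φ n - ψ n‖ * ‖SΦinv (φ n)‖ * (‖u‖ * ‖v‖) := by
      intro n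
      have h1 : ‖((UΦ - UΨ) u) n‖ ≤ ‖φ n - ψ n‖ * ‖u‖ := by
        rw [hD]; exact norm_inner_le_norm _ _
      have h2 : ‖(UΦ (SΦinv v)) n‖ ≤ ‖SΦinv (φ n)‖ * ‖v‖ := by
        rw [hUΦ', ← hSinner]
        exact norm_inner_le_norm _ _
      calc ‖(inner ℂ (((UΦ - UΨ) u) n) ((UΦ (SΦinv v)) n) : ℂ)‖
          ≤ ‖((UΦ - UΨ) u) n‖ * ‖(UΦ (SΦinv v)) n‖ := norm_inner_le_norm _ _
        _ ≤ (‖φ n - ψ n‖ * ‖u‖) * (‖SΦinv (φ n)‖ * ‖v‖) :=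
            mul_le_mul h1 h2 (norm_nonneg _) (by positivity)
        _ = ‖φ n - ψ n‖ * ‖SΦinv (φ n)‖ * (‖u‖ * ‖v‖) := by ring
    have hsum : Summable fun n : ℕ => ‖(inner ℂ (((UΦ - UΨ) u) n) ((UΦ (SΦinv v)) n) : ℂ)‖ :=
      Summable.of_nonneg_of_le (fun n => norm_nonneg _) hterm (hq0s.mul_right _)
    calc ‖∑' n, (inner ℂ (((UΦ - UΨ) u) n) ((UΦ (SΦinv v)) n) : ℂ)‖
        ≤ ∑' n, ‖(inner ℂ (((UΦ - UΨ) u) n) ((UΦ (SΦinv v)) n) : ℂ)‖ :=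
          norm_tsum_le_tsum_norm hsum
      _ ≤ ∑' n, ‖φ n - ψ n‖ * ‖SΦinv (φ n)‖ * (‖u‖ * ‖v‖) :=
          Summable.tsum_le_tsum hterm hsum (hq0s.mul_right _)
      _ = q0 * ‖u‖ * ‖v‖ := by rw [tsum_mul_right, hq0]; ring
  -- ‖B g‖ ≤ q0 ‖g‖
  have hB : ∀ g : H, ‖SΦinv (adjoint UΦ ((UΦ - UΨ) g))‖ ≤ q0 * ‖g‖ := by
    intro g
    have h1 : ‖SΦinv (adjoint UΦ ((UΦ - UΨ) g))‖ ^ 2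
        = RCLike.re (inner ℂ ((UΦ - UΨ) g)
            (UΦ (SΦinv (SΦinv (adjoint UΦ ((UΦ - UΨ) g))))) : ℂ) := by
      rw [← inner_self_eq_norm_sq (𝕜 := ℂ), hSinner, adjoint_inner_left]
    have h2 : RCLike.re (inner ℂ ((UΦ - UΨ) g)
          (UΦ (SΦinv (SΦinv (adjoint UΦ ((UΦ - UΨ) g))))) : ℂ)
        ≤ q0 * ‖g‖ * ‖SΦinv (adjoint UΦ ((UΦ - UΨ) g))‖ :=
      (RCLike.re_le_norm _).trans (hK g _)
    rcases eq_or_ne ‖SΦinv (adjoint UΦ ((UΦ - UΨ) g))‖ 0 with h0 | h0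
    · rw [h0]; positivity
    · have hpos : 0 < ‖SΦinv (adjoint UΦ ((UΦ - UΨ) g))‖ :=
        lt_of_le_of_ne (norm_nonneg _) (Ne.symm h0)
      nlinarith
  -- lower frame bound for UΨ
  have hΨlow : ∀ g : H, (1 - q0) * (Real.sqrt mΦ * ‖g‖) ≤ ‖UΨ g‖ := by
    intro g
    have hid : g - SΦinv (adjoint UΦ ((UΦ - UΨ) g)) = SΦinv (adjoint UΦ (UΨ g)) := by
      rw [ContinuousLinearMap.sub_apply, map_sub, map_sub, hSapp, hSS2]
      abel
    have h3 : (1 - q0) * ‖g‖ ≤ ‖SΦinv (adjoint UΦ (UΨ g))‖ := by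
      have h4 := hB g
      have h5 : ‖g‖ ≤ ‖g - SΦinv (adjoint UΦ ((UΦ - UΨ) g))‖ +
          ‖SΦinv (adjoint UΦ ((UΦ - UΨ) g))‖ := by
        have := norm_add_le (g - SΦinv (adjoint UΦ ((UΦ - UΨ) g)))
          (SΦinv (adjoint UΦ ((UΦ - UΨ) g)))
        simpa using this
      rw [hid] at h5
      linarith
    have h6 := hSinvT (UΨ g)
    have hs : 0 ≤ Real.sqrt mΦ := Real.sqrt_nonneg _
    nlinarith [norm_nonneg (SΦinv (adjoint UΦ (UΨ g))), norm_nonneg g]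
  -- arithmetic on constants
  have hsq_split : Real.sqrt q = Real.sqrt (q / mΦ) * Real.sqrt mΦ := by
    rw [← Real.sqrt_mul (by positivity) mΦ, div_mul_cancel₀ _ hm.ne']
  have hCnn : 0 ≤ 1 / (1 - q0) * Real.sqrt (q / mΦ) := by positivity
  have hone : Real.sqrt (q / mΦ) ≤ 1 / (1 - q0) * Real.sqrt (q / mΦ) := by
    refine le_mul_of_one_le_left (Real.sqrt_nonneg _) ?_
    rw [le_div_iff₀ h1q]
    linarith
  refine max_le ?_ ?_
  · refine gap_le_of_forall _ _ _ _ hCnn ?_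
    intro v hv
    obtain ⟨f, rfl⟩ := hv
    have hy : (UΨ f) ∈ (LinearMap.range (UΨ : H →ₗ[ℂ] ℓ²)).topologicalClosure :=
      Submodule.le_topologicalClosure _ (LinearMap.mem_range_self _ f)
    calc ‖UΦ f - orthProj _ _ (UΦ f)‖ ≤ ‖UΦ f - UΨ f‖ := orthProj_dist_le _ _ _ _ hy
      _ = ‖(UΦ - UΨ) f‖ := by rw [ContinuousLinearMap.sub_apply]
      _ ≤ Real.sqrt q * ‖f‖ := hDnorm f
      _ = Real.sqrt (q / mΦ) * (Real.sqrt mΦ * ‖f‖) := by rw [hsq_split]; ring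
      _ ≤ Real.sqrt (q / mΦ) * ‖UΦ f‖ :=
          mul_le_mul_of_nonneg_left (hΦlow f) (Real.sqrt_nonneg _)
      _ ≤ 1 / (1 - q0) * Real.sqrt (q / mΦ) * ‖UΦ f‖ :=
          mul_le_mul_of_nonneg_right hone (norm_nonneg _)
  · refine gap_le_of_forall _ _ _ _ hCnn ?_
    intro v hv
    obtain ⟨g, rfl⟩ := hv
    have hy : (UΦ g) ∈ (LinearMap.range (UΦ : H →ₗ[ℂ] ℓ²)).topologicalClosure :=
      Submodule.le_topologicalClosure _ (LinearMap.mem_range_self _ g)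
    have key : Real.sqrt q * ‖g‖
        = 1 / (1 - q0) * Real.sqrt (q / mΦ) * ((1 - q0) * (Real.sqrt mΦ * ‖g‖)) := by
      rw [hsq_split]
      field_simp
    calc ‖UΨ g - orthProj _ _ (UΨ g)‖ ≤ ‖UΨ g - UΦ g‖ := orthProj_dist_le _ _ _ _ hy
      _ = ‖(UΦ - UΨ) g‖ := by rw [norm_sub_rev, ← ContinuousLinearMap.sub_apply]
      _ ≤ Real.sqrt q * ‖g‖ := hDnorm g
      _ = 1 / (1 - q0) * Real.sqrt (q / mΦ) * ((1 - q0) * (Real.sqrt mΦ * ‖g‖)) := key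
      _ ≤ 1 / (1 - q0) * Real.sqrt (q / mΦ) * ‖UΨ g‖ :=
          mul_le_mul_of_nonneg_left (hΨlow g) hCnn

end
end

section
/- Let Φ and Ψ be frames for H, and let A₁, A₂ ∈ B(H) with ‖Id − Aᵢ‖ < 1 (i = 1, 2). For approximately dual frames Φ_{Θ₁}^{ad}(A₁) of Φ and Ψ_{Θ₂}^{ad}(A₂) of Ψ (with T_Φ Θ₁ = 0, T_Ψ Θ₂ = 0), the synthesis operators satisfy: T_{Ψ_{Θ₂}^{ad}(A₂)} − T_{Φ_{Θ₁}^{ad}(A₁)} = T_{Φ_{Θ₁}^{ad}(A₁)} (U_Φ − U_Ψ) T_{Ψ̃(0)} + Θ₂* − T_{Φ_{Θ₁}^{ad}(A₁)} P_{ker T_Ψ} − (A₁* − A₂*) T_{Ψ̃(0)}, where T_{Ψ̃(0)} = S_Ψ⁻¹ T_Ψ is the synthesis operator of the canonical dual of Ψ. -/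
open ContinuousLinearMap MeasureTheory
open scoped InnerProductSpace ComplexConjugate

noncomputable section

variable {H : Type} [NormedAddCommGroup H] [InnerProductSpace ℂ H] [CompleteSpace H]

theorem stmt9
    (φ ψ : ℕ → H) (mΦ MΦ mΨ MΨ : ℝ)
    (UΦ UΨ : H →L[ℂ] ℓ²) (TΦ TΨ : ℓ² →L[ℂ] H)
    (SΦ SΦinv SΨ SΨinv A1 A2 : H →L[ℂ] H) (Θ1 Θ2 : H →L[ℂ] ℓ²)
    (hUΦ : IsAnalysis φ UΦ) (hUΨ : IsAnalysis ψ UΨ)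
    (hTΦ : TΦ = adjoint UΦ) (hTΨ : TΨ = adjoint UΨ)
    (hSΦ : SΦ = TΦ ∘L UΦ) (hSΨ : SΨ = TΨ ∘L UΨ)
    (hSΦ1 : SΦ ∘L SΦinv = ContinuousLinearMap.id ℂ H)
    (hSΦ2 : SΦinv ∘L SΦ = ContinuousLinearMap.id ℂ H)
    (hSΨ1 : SΨ ∘L SΨinv = ContinuousLinearMap.id ℂ H)
    (hSΨ2 : SΨinv ∘L SΨ = ContinuousLinearMap.id ℂ H)
    (hΦ : IsFrame φ mΦ MΦ) (hΨ : IsFrame ψ mΨ MΨ)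
    (hA1 : ‖ContinuousLinearMap.id ℂ H - A1‖ < 1)
    (hA2 : ‖ContinuousLinearMap.id ℂ H - A2‖ < 1)
    (hΘ1 : TΦ ∘L Θ1 = 0) (hΘ2 : TΨ ∘L Θ2 = 0)
    (DΦ DΨ : ℓ² →L[ℂ] H)
    (hDΦ : DΦ = adjoint A1 ∘L (SΦinv ∘L TΦ) + adjoint Θ1)
    (hDΨ : DΨ = adjoint A2 ∘L (SΨinv ∘L TΨ) + adjoint Θ2) :
    DΨ - DΦ =
      DΦ ∘L ((UΦ - UΨ) ∘L (SΨinv ∘L TΨ)) + adjoint Θ2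
        - DΦ ∘L orthProj (LinearMap.ker (TΨ : ℓ² →ₗ[ℂ] H)) (ContinuousLinearMap.isClosed_ker TΨ)
        - (adjoint A1 - adjoint A2) ∘L (SΨinv ∘L TΨ) := by
  -- The projection onto ker TΨ is id - UΨ ∘ SΨinv ∘ TΨ
  have hproj : orthProj (LinearMap.ker (TΨ : ℓ² →ₗ[ℂ] H)) (ContinuousLinearMap.isClosed_ker TΨ)
      = ContinuousLinearMap.id ℂ ℓ² - UΨ ∘L (SΨinv ∘L TΨ) := by
    refine ContinuousLinearMap.ext fun x => ?_
    have hmem : x - UΨ (SΨinv (TΨ x)) ∈ LinearMap.ker (TΨ : ℓ² →ₗ[ℂ] H) := by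
      have hS : SΨ (SΨinv (TΨ x)) = TΨ x := by
        have := congrFun (congrArg DFunLike.coe hSΨ1) (TΨ x)
        simpa using this
      simp only [LinearMap.mem_ker, map_sub, ContinuousLinearMap.coe_coe]
      rw [show TΨ (UΨ (SΨinv (TΨ x))) = SΨ (SΨinv (TΨ x)) by rw [hSΨ]; rfl]
      rw [hS, sub_self]
    have horth : x - (x - UΨ (SΨinv (TΨ x))) ∈ (LinearMap.ker (TΨ : ℓ² →ₗ[ℂ] H) : Submodule ℂ ℓ²)ᗮ := by
      rw [sub_sub_cancel]
      intro y hy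
      have hy' : TΨ y = 0 := hy
      rw [hTΨ] at hy'
      rw [← ContinuousLinearMap.adjoint_inner_left, hy', inner_zero_left]
    have := Submodule.eq_starProjection_of_mem_orthogonal (K := LinearMap.ker (TΨ : ℓ² →ₗ[ℂ] H)) hmem horth
    rw [Submodule.starProjection_apply] at this
    simp only [orthProj, ContinuousLinearMap.comp_apply, Submodule.subtypeL_apply,
      ContinuousLinearMap.sub_apply, ContinuousLinearMap.id_apply]
    exact this
  -- adjoint Θ1 ∘ UΦ = 0
  have hΘ1adj : adjoint Θ1 ∘L UΦ = 0 := by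
    have h0 : adjoint (adjoint UΦ ∘L Θ1) = 0 := by
      rw [← hTΦ, hΘ1]; simp
    rwa [ContinuousLinearMap.adjoint_comp, ContinuousLinearMap.adjoint_adjoint] at h0
  -- DΦ ∘ UΦ = adjoint A1
  have hDU : DΦ ∘L UΦ = adjoint A1 := by
    rw [hDΦ, ContinuousLinearMap.add_comp, hΘ1adj, add_zero, ContinuousLinearMap.comp_assoc,
      ContinuousLinearMap.comp_assoc, ← hSΦ, hSΦ2, ContinuousLinearMap.comp_id]
  rw [hproj]
  have expand : DΦ ∘L ((UΦ - UΨ) ∘L (SΨinv ∘L TΨ))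
      = adjoint A1 ∘L (SΨinv ∘L TΨ) - (DΦ ∘L UΨ) ∘L (SΨinv ∘L TΨ) := by
    rw [ContinuousLinearMap.sub_comp, ContinuousLinearMap.comp_sub,
      ← ContinuousLinearMap.comp_assoc, ← ContinuousLinearMap.comp_assoc, hDU]
    simp only [ContinuousLinearMap.comp_assoc]
  have expand2 : DΦ ∘L (ContinuousLinearMap.id ℂ ℓ² - UΨ ∘L (SΨinv ∘L TΨ))
      = DΦ - (DΦ ∘L UΨ) ∘L (SΨinv ∘L TΨ) := by
    rw [ContinuousLinearMap.comp_sub, ContinuousLinearMap.comp_id,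
      ← ContinuousLinearMap.comp_assoc]
  rw [expand, expand2, hDΨ, ContinuousLinearMap.sub_comp]
  simp only [ContinuousLinearMap.comp_assoc]
  abel

end
end

section
/- Let Φ be a frame with lower bound m_Φ and let Ψ be a Bessel sequence with ‖T_Φ − T_Ψ‖ ≤ μ < √m_Φ/2. Then ‖P_{ker T_Φ} − P_{ker T_Ψ}‖ < 1, and consequently the restriction P_{ker T_Ψ}|_{ker T_Φ} : ker T_Φ → ker T_Ψ is an isomorphism of closed subspaces of ℓ². -/
open ContinuousLinearMap MeasureTheory
open scoped InnerProductSpace ComplexConjugate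

noncomputable section

variable {H : Type} [NormedAddCommGroup H] [InnerProductSpace ℂ H] [CompleteSpace H]

/-! ### Auxiliary lemmas -/

section Aux

variable {E : Type} [NormedAddCommGroup E] [InnerProductSpace ℂ E] [CompleteSpace E]

lemma orthProj_mem (K : Submodule ℂ E) (hK : IsClosed (K : Set E)) (x : E) :
    orthProj K hK x ∈ K := by
  haveI := hK.completeSpace_coe
  exact (K.orthogonalProjectionOnto x).2

lemma orthProj_eq_self (K : Submodule ℂ E) (hK : IsClosed (K : Set E)) {x : E} (hx : x ∈ K) :
    orthProj K hK x = x := by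
  haveI := hK.completeSpace_coe
  have := Submodule.orthogonalProjectionOnto_mem_subspace_eq_self (K := K) ⟨x, hx⟩
  simpa [orthProj] using congrArg (Subtype.val) this

lemma orthProj_sub_mem_orthogonal (K : Submodule ℂ E) (hK : IsClosed (K : Set E)) (x : E) :
    x - orthProj K hK x ∈ Kᗮ := by
  haveI := hK.completeSpace_coe
  exact Submodule.sub_starProjection_mem_orthogonal (K := K) x

lemma orthProj_mul (K : Submodule ℂ E) (hK : IsClosed (K : Set E)) :
    orthProj K hK * orthProj K hK = orthProj K hK := by
  ext x
  exact orthProj_eq_self K hK (orthProj_mem K hK x)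

lemma orthProj_congr {K K' : Submodule ℂ E} (h : K = K') (hK : IsClosed (K : Set E))
    (hK' : IsClosed (K' : Set E)) : orthProj K hK = orthProj K' hK' := by
  subst h; rfl

lemma orthProj_orthogonal (K : Submodule ℂ E) (hK : IsClosed (K : Set E)) :
    orthProj Kᗮ K.isClosed_orthogonal = 1 - orthProj K hK := by
  haveI := hK.completeSpace_coe
  ext x
  exact Submodule.starProjection_orthogonal_val (K := K) x

lemma orthProj_dist_le_s15 (K : Submodule ℂ E) (hK : IsClosed (K : Set E)) (x : E)
    {k : E} (hk : k ∈ K) : ‖x - orthProj K hK x‖ ≤ ‖x - k‖ := by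
  haveI := hK.completeSpace_coe
  rw [show orthProj K hK x = K.starProjection x from rfl,
    Submodule.starProjection_minimal]
  exact ciInf_le ⟨0, by rintro b ⟨y, rfl⟩; exact norm_nonneg _⟩ (⟨k, hk⟩ : K)

lemma orthProjTo_coe (K : Submodule ℂ E) (hK : IsClosed (K : Set E)) (x : E) :
    (orthProjTo K hK x : E) = orthProj K hK x := rfl

lemma orthProj_norm_le_of_orthogonal (M N : Submodule ℂ E) (hM : IsClosed (M : Set E))
    (hN : IsClosed (N : Set E)) {r : ℝ} (hr : 0 ≤ r)
    (hNM : ∀ y ∈ N, ‖y - orthProj M hM y‖ ≤ r * ‖y‖)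
    {w : E} (hw : w ∈ Mᗮ) : ‖orthProj N hN w‖ ≤ r * ‖w‖ := by
  set Q := orthProj N hN with hQdef
  set q := Q w with hqdef
  have hqN : q ∈ N := orthProj_mem N hN w
  have h1 : (inner ℂ q w : ℂ) = inner ℂ q q := by
    have horth : w - q ∈ Nᗮ := orthProj_sub_mem_orthogonal N hN w
    have : (inner ℂ q (w - q) : ℂ) = 0 := horth q hqN
    rw [inner_sub_right] at this
    linear_combination this
  have h2 : (inner ℂ (orthProj M hM q) w : ℂ) = 0 := hw _ (orthProj_mem M hM q)
  have h3 : ‖q‖ ^ 2 ≤ ‖q - orthProj M hM q‖ * ‖w‖ := by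
    have : (‖q‖ : ℝ) ^ 2 = RCLike.re (inner ℂ (q - orthProj M hM q) w : ℂ) := by
      rw [inner_sub_left, h2, sub_zero, h1, inner_self_eq_norm_sq]
    rw [this]
    exact le_trans (RCLike.re_le_norm _) (norm_inner_le_norm _ _)
  have h4 : ‖q‖ ^ 2 ≤ r * ‖q‖ * ‖w‖ :=
    h3.trans (mul_le_mul_of_nonneg_right (hNM q hqN) (norm_nonneg _))
  rcases eq_or_lt_of_le (norm_nonneg q) with h | h
  · rw [← h]
    exact mul_nonneg hr (norm_nonneg w)
  · nlinarith

lemma orthProj_diff_norm_le (M N : Submodule ℂ E) (hM : IsClosed (M : Set E))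
    (hN : IsClosed (N : Set E)) {r : ℝ} (hr : 0 ≤ r)
    (hMN : ∀ x ∈ M, ‖x - orthProj N hN x‖ ≤ r * ‖x‖)
    (hNM : ∀ y ∈ N, ‖y - orthProj M hM y‖ ≤ r * ‖y‖) :
    ‖orthProj M hM - orthProj N hN‖ ≤ r := by
  refine opNorm_le_bound _ hr fun x => ?_
  set P := orthProj M hM with hP
  set Q := orthProj N hN with hQ
  set p := P x with hp
  set a := p - Q p with hadef
  set b := Q (x - p) with hbdef
  have hab : (P - Q) x = a - b := by
    have : b = Q x - Q p := by rw [hbdef, map_sub]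
    rw [this, hadef]
    simp only [sub_apply]
    abel
  have ha_mem : a ∈ Nᗮ := orthProj_sub_mem_orthogonal N hN p
  have hb_mem : b ∈ N := orthProj_mem N hN _
  have hinner : (inner ℂ a b : ℂ) = 0 := by
    rw [← inner_conj_symm]
    rw [ha_mem b hb_mem]
    simp
  have pyth1 : ‖a - b‖ ^ 2 = ‖a‖ ^ 2 + ‖b‖ ^ 2 := by
    rw [@norm_sub_sq ℂ, hinner]
    simp
  have hxp : x - p ∈ Mᗮ := orthProj_sub_mem_orthogonal M hM x
  have hpx : (inner ℂ p (x - p) : ℂ) = 0 := hxp p (orthProj_mem M hM x)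
  have pyth2 : ‖x‖ ^ 2 = ‖p‖ ^ 2 + ‖x - p‖ ^ 2 := by
    have : x = p + (x - p) := by abel
    nth_rewrite 1 [this]
    rw [@norm_add_sq ℂ, hpx]
    simp
  have hanorm : ‖a‖ ≤ r * ‖p‖ := hMN p (orthProj_mem M hM x)
  have hbnorm : ‖b‖ ≤ r * ‖x - p‖ :=
    orthProj_norm_le_of_orthogonal M N hM hN hr hNM hxp
  have ha2 : ‖a‖ ^ 2 ≤ (r * ‖p‖) ^ 2 := by
    nlinarith [norm_nonneg a, mul_nonneg hr (norm_nonneg p)]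
  have hb2 : ‖b‖ ^ 2 ≤ (r * ‖x - p‖) ^ 2 := by
    nlinarith [norm_nonneg b, mul_nonneg hr (norm_nonneg (x - p))]
  have hr2 : r ^ 2 * ‖x‖ ^ 2 = r ^ 2 * ‖p‖ ^ 2 + r ^ 2 * ‖x - p‖ ^ 2 := by
    rw [pyth2]; ring
  have hfin : ‖a - b‖ ^ 2 ≤ (r * ‖x‖) ^ 2 := by nlinarith
  rw [hab]
  nlinarith [norm_nonneg (a - b), mul_nonneg hr (norm_nonneg x)]

lemma bijective_of_norm_lt (X Y : Submodule ℂ E) (hX : IsClosed (X : Set E))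
    (hY : IsClosed (Y : Set E)) (h : ‖orthProj X hX - orthProj Y hY‖ < 1) :
    Function.Bijective ⇑((orthProjTo Y hY).comp X.subtypeL) := by
  set P := orthProj X hX with hPdef
  set Q := orthProj Y hY with hQdef
  have hP : P * P = P := orthProj_mul X hX
  have hQ : Q * Q = Q := orthProj_mul Y hY
  set D : E →L[ℂ] E := P - Q with hDdef
  constructor
  · -- injective
    intro a b hab
    have key : ∀ z : X, orthProjTo Y hY (z : E) = 0 → z = 0 := by
      intro z hz
      have h1 : Q (z : E) = 0 := by
        rw [← orthProjTo_coe Y hY, hz]; rfl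
      have h2 : P (z : E) = (z : E) := orthProj_eq_self X hX z.2
      have h3 : ‖(z : E)‖ ≤ ‖P - Q‖ * ‖(z : E)‖ := by
        calc ‖(z : E)‖ = ‖(P - Q) (z : E)‖ := by
              rw [sub_apply, h1, h2, sub_zero]
          _ ≤ ‖P - Q‖ * ‖(z : E)‖ := le_opNorm _ _
      have : ‖(z : E)‖ = 0 := by nlinarith [norm_nonneg (z : E)]
      exact Subtype.ext (norm_eq_zero.mp this)
    have : a - b = 0 := by
      apply key
      have : ((a : E) - (b : E)) = ((a - b : X) : E) := rfl
      rw [← this, map_sub]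
      have hab' : orthProjTo Y hY (a : E) = orthProjTo Y hY (b : E) := hab
      rw [hab', sub_self]
    exact sub_eq_zero.mp this
  · -- surjective
    have hDD : D * D = P + Q - P * Q - Q * P := by
      simp only [hDdef, sub_mul, mul_sub, hP, hQ]
      abel
    have hnorm : ‖D * D‖ < 1 := by
      calc ‖D * D‖ ≤ ‖D‖ * ‖D‖ := norm_mul_le D D
        _ < 1 := by nlinarith [norm_nonneg D]
    set u : (E →L[ℂ] E)ˣ := Units.oneSub (D * D) hnorm with hu
    have huval : (u : E →L[ℂ] E) = 1 - D * D := rfl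
    have h1 : Q * (u : E →L[ℂ] E) = Q * P * Q := by
      rw [huval, hDD]
      simp only [mul_sub, mul_add, mul_one, ← mul_assoc, hQ]
      abel
    have h2 : (u : E →L[ℂ] E) * Q = Q * P * Q := by
      rw [huval, hDD]
      simp only [sub_mul, add_mul, one_mul, mul_assoc, hQ]
      simp only [← mul_assoc]
      abel
    have hcommu : (u : E →L[ℂ] E) * Q = Q * (u : E →L[ℂ] E) := by rw [h1, h2]
    have hcomm : (↑u⁻¹ : E →L[ℂ] E) * Q = Q * ↑u⁻¹ := by
      have e1 : (↑u⁻¹ : E →L[ℂ] E) * Q * ↑u = ↑u⁻¹ * (↑u * Q) := by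
        rw [mul_assoc, hcommu]
      rw [Units.inv_mul_cancel_left] at e1
      exact ((Units.mul_inv_eq_iff_eq_mul u).mpr e1.symm).symm
    intro y
    set z := P (Q ((↑u⁻¹ : E →L[ℂ] E) (y : E))) with hzdef
    refine ⟨⟨z, orthProj_mem X hX _⟩, ?_⟩
    apply Subtype.ext
    have hop : Q * (P * (Q * (↑u⁻¹ : E →L[ℂ] E))) = Q := by
      calc Q * (P * (Q * (↑u⁻¹ : E →L[ℂ] E))) = (Q * P * Q) * ↑u⁻¹ := by
            simp only [mul_assoc]
        _ = ((u : E →L[ℂ] E) * Q) * ↑u⁻¹ := by rw [h2]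
        _ = (u : E →L[ℂ] E) * (↑u⁻¹ * Q) := by rw [mul_assoc, hcomm.symm]
        _ = Q := by rw [← mul_assoc, Units.mul_inv, one_mul]
    have hQz : Q z = (y : E) := by
      have e := congrArg (fun T : E →L[ℂ] E => T (y : E)) hop
      simp only [mul_apply_eq_comp] at e
      rw [hzdef, e]
      exact orthProj_eq_self Y hY y.2
    calc (((orthProjTo Y hY).comp X.subtypeL) ⟨z, orthProj_mem X hX _⟩ : E)
        = Q z := rfl
      _ = (y : E) := hQz

end Aux

lemma l2norm_sq (g : ℓ²) : ‖g‖ ^ 2 = ∑' n, ‖g n‖ ^ 2 := by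
  have h := lp.norm_rpow_eq_tsum (p := 2) (by norm_num) g
  calc ‖g‖ ^ 2 = ‖g‖ ^ ((2 : ENNReal).toReal) := by
        rw [ENNReal.toReal_ofNat, ← Real.rpow_natCast ‖g‖ 2]; norm_num
    _ = ∑' n, ‖g n‖ ^ ((2 : ENNReal).toReal) := h
    _ = ∑' n, ‖g n‖ ^ 2 := by
        refine tsum_congr fun n => ?_
        rw [ENNReal.toReal_ofNat, ← Real.rpow_natCast ‖g n‖ 2]; norm_num

lemma ker_adjoint_eq {E F : Type} [NormedAddCommGroup E] [InnerProductSpace ℂ E]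
    [CompleteSpace E] [NormedAddCommGroup F] [InnerProductSpace ℂ F] [CompleteSpace F]
    (U : E →L[ℂ] F) :
    LinearMap.ker (adjoint U : F →ₗ[ℂ] E) = (LinearMap.range (U : E →ₗ[ℂ] F))ᗮ := by
  ext x
  simp only [LinearMap.mem_ker, Submodule.mem_orthogonal, ContinuousLinearMap.coe_coe]
  constructor
  · intro hx u hu
    obtain ⟨f, rfl⟩ := hu
    rw [ContinuousLinearMap.coe_coe]
    rw [← inner_conj_symm]
    have : (inner ℂ x (U f) : ℂ) = inner ℂ (adjoint U x) f := (adjoint_inner_left U f x).symm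
    rw [this, hx, inner_zero_left, map_zero]
  · intro hx
    have : ∀ f : E, (inner ℂ (adjoint U x) f : ℂ) = 0 := by
      intro f
      rw [adjoint_inner_left U f x, ← inner_conj_symm, hx (U f) ⟨f, rfl⟩, map_zero]
    have := this (adjoint U x)
    rwa [inner_self_eq_zero] at this

lemma closed_range_of_bound {E F : Type} [NormedAddCommGroup E] [InnerProductSpace ℂ E]
    [CompleteSpace E] [NormedAddCommGroup F] [InnerProductSpace ℂ F] [CompleteSpace F]
    (U : E →L[ℂ] F) {c : ℝ} (hc : 0 < c) (h : ∀ f, c * ‖f‖ ≤ ‖U f‖) :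
    IsClosed ((LinearMap.range (U : E →ₗ[ℂ] F) : Submodule ℂ F) : Set F) := by
  have ha : AntilipschitzWith (⟨c, hc.le⟩ : NNReal)⁻¹ U := by
    apply ContinuousLinearMap.antilipschitz_of_bound
    intro x
    have e : (((⟨c, hc.le⟩ : NNReal)⁻¹ : NNReal) : ℝ) = c⁻¹ := NNReal.coe_inv _
    rw [e]
    rw [inv_mul_eq_div, le_div_iff₀ hc]
    linarith [h x]
  have := ha.isClosed_range U.uniformContinuous
  convert this using 1
  exact LinearMap.coe_range _

set_option maxHeartbeats 2000000 in
theorem stmt15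
    (φ ψ : ℕ → H) (mΦ MΦ MΨ μ : ℝ)
    (UΦ UΨ : H →L[ℂ] ℓ²) (TΦ TΨ : ℓ² →L[ℂ] H)
    (hUΦ : IsAnalysis φ UΦ) (hUΨ : IsAnalysis ψ UΨ)
    (hTΦ : TΦ = adjoint UΦ) (hTΨ : TΨ = adjoint UΨ)
    (hΦ : IsFrame φ mΦ MΦ) (hΨ : IsBessel ψ MΨ)
    (hμ : μ < Real.sqrt mΦ / 2) (hper : ‖TΦ - TΨ‖ ≤ μ) :
    ‖orthProj (LinearMap.ker (TΦ : ℓ² →ₗ[ℂ] H)) (ContinuousLinearMap.isClosed_ker TΦ) -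
        orthProj (LinearMap.ker (TΨ : ℓ² →ₗ[ℂ] H)) (ContinuousLinearMap.isClosed_ker TΨ)‖ < 1 ∧
      Function.Bijective
        ⇑((orthProjTo (LinearMap.ker (TΨ : ℓ² →ₗ[ℂ] H)) (ContinuousLinearMap.isClosed_ker TΨ)).comp
            (LinearMap.ker (TΦ : ℓ² →ₗ[ℂ] H)).subtypeL) := by
  obtain ⟨hm, hM, hframe⟩ := hΦ
  set c := Real.sqrt mΦ with hc
  have hc0 : 0 < c := Real.sqrt_pos.mpr hm
  have hμ0 : 0 ≤ μ := le_trans (norm_nonneg _) hper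
  have hcμ : 0 < c - μ := by
    have : c / 2 < c := by linarith
    linarith
  -- norm of UΦ f
  have hUΦsq : ∀ f : H, ‖UΦ f‖ ^ 2 = ∑' n, ‖(inner ℂ (φ n) f : ℂ)‖ ^ 2 := by
    intro f
    rw [l2norm_sq]
    exact tsum_congr fun n => by rw [hUΦ f n]
  have hUΦlow : ∀ f : H, c * ‖f‖ ≤ ‖UΦ f‖ := by
    intro f
    have h1 : mΦ * ‖f‖ ^ 2 ≤ ‖UΦ f‖ ^ 2 := by
      rw [hUΦsq f]; exact (hframe f).1
    have hcsq : c ^ 2 = mΦ := Real.sq_sqrt hm.le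
    nlinarith [norm_nonneg (UΦ f), mul_nonneg hc0.le (norm_nonneg f)]
  -- operator norm of the difference
  have hdiff : ‖UΦ - UΨ‖ ≤ μ := by
    have e : ContinuousLinearMap.adjoint (UΦ - UΨ) = TΦ - TΨ := by
      rw [hTΦ, hTΨ, map_sub]
    have := ContinuousLinearMap.adjoint.norm_map (UΦ - UΨ)
    rw [e] at this
    rw [← this]
    exact hper
  have hUΨlow : ∀ g : H, (c - μ) * ‖g‖ ≤ ‖UΨ g‖ := by
    intro g
    have h1 : ‖UΦ g - UΨ g‖ ≤ μ * ‖g‖ := by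
      have := (UΦ - UΨ).le_opNorm g
      simp only [sub_apply] at this
      exact this.trans (mul_le_mul_of_nonneg_right hdiff (norm_nonneg g))
    have h2 : ‖UΦ g‖ - ‖UΨ g‖ ≤ ‖UΦ g - UΨ g‖ := norm_sub_norm_le _ _
    have h3 := hUΦlow g
    nlinarith
  set M : Submodule ℂ ℓ² := LinearMap.range (UΦ : H →ₗ[ℂ] ℓ²) with hMdef
  set N : Submodule ℂ ℓ² := LinearMap.range (UΨ : H →ₗ[ℂ] ℓ²) with hNdef
  have hMc : IsClosed (M : Set ℓ²) := closed_range_of_bound UΦ hc0 hUΦlow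
  have hNc : IsClosed (N : Set ℓ²) := closed_range_of_bound UΨ hcμ hUΨlow
  set r : ℝ := μ / (c - μ) with hrdef
  have hr0 : 0 ≤ r := div_nonneg hμ0 hcμ.le
  have hr1 : r < 1 := by
    rw [hrdef, div_lt_one hcμ]
    linarith
  have hrc : r * (c - μ) = μ := div_mul_cancel₀ μ (ne_of_gt hcμ)
  have hMN : ∀ x ∈ M, ‖x - orthProj N hNc x‖ ≤ r * ‖x‖ := by
    rintro x ⟨f, rfl⟩
    have h1 : ‖UΦ f - orthProj N hNc (UΦ f)‖ ≤ ‖UΦ f - UΨ f‖ :=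
      orthProj_dist_le_s15 N hNc (UΦ f) ⟨f, rfl⟩
    have h2 : ‖UΦ f - UΨ f‖ ≤ μ * ‖f‖ := by
      have := (UΦ - UΨ).le_opNorm f
      simp only [sub_apply] at this
      exact this.trans (mul_le_mul_of_nonneg_right hdiff (norm_nonneg f))
    have h3 : μ * ‖f‖ ≤ r * ‖UΦ f‖ := by
      have h4 := hUΦlow f
      have h5 : r * (c - μ) * ‖f‖ = μ * ‖f‖ := by rw [hrc]
      nlinarith [mul_le_mul_of_nonneg_left h4 hr0,
        mul_nonneg (mul_nonneg hr0 hμ0) (norm_nonneg f)]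
    exact le_trans h1 (le_trans h2 h3)
  have hNM : ∀ y ∈ N, ‖y - orthProj M hMc y‖ ≤ r * ‖y‖ := by
    rintro y ⟨g, rfl⟩
    have h1 : ‖UΨ g - orthProj M hMc (UΨ g)‖ ≤ ‖UΨ g - UΦ g‖ :=
      orthProj_dist_le_s15 M hMc (UΨ g) ⟨g, rfl⟩
    have h2 : ‖UΨ g - UΦ g‖ ≤ μ * ‖g‖ := by
      rw [norm_sub_rev]
      have := (UΦ - UΨ).le_opNorm g
      simp only [sub_apply] at this
      exact this.trans (mul_le_mul_of_nonneg_right hdiff (norm_nonneg g))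
    have h3 : μ * ‖g‖ ≤ r * ‖UΨ g‖ := by
      have h4 := hUΨlow g
      have h5 : r * (c - μ) * ‖g‖ = μ * ‖g‖ := by rw [hrc]
      nlinarith [mul_le_mul_of_nonneg_left h4 hr0]
    exact le_trans h1 (le_trans h2 h3)
  have hPMN : ‖orthProj M hMc - orthProj N hNc‖ ≤ r :=
    orthProj_diff_norm_le M N hMc hNc hr0 hMN hNM
  -- kernels are orthogonal complements of the ranges
  have hXM : LinearMap.ker (TΦ : ℓ² →ₗ[ℂ] H) = Mᗮ := by rw [hTΦ]; exact ker_adjoint_eq UΦ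
  have hYN : LinearMap.ker (TΨ : ℓ² →ₗ[ℂ] H) = Nᗮ := by rw [hTΨ]; exact ker_adjoint_eq UΨ
  have e1 : orthProj (LinearMap.ker (TΦ : ℓ² →ₗ[ℂ] H)) (ContinuousLinearMap.isClosed_ker TΦ) =
      1 - orthProj M hMc := by
    rw [orthProj_congr hXM (ContinuousLinearMap.isClosed_ker TΦ) M.isClosed_orthogonal,
      orthProj_orthogonal M hMc]
  have e2 : orthProj (LinearMap.ker (TΨ : ℓ² →ₗ[ℂ] H)) (ContinuousLinearMap.isClosed_ker TΨ) =
      1 - orthProj N hNc := by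
    rw [orthProj_congr hYN (ContinuousLinearMap.isClosed_ker TΨ) N.isClosed_orthogonal,
      orthProj_orthogonal N hNc]
  have hlt : ‖orthProj (LinearMap.ker (TΦ : ℓ² →ₗ[ℂ] H)) (ContinuousLinearMap.isClosed_ker TΦ) -
      orthProj (LinearMap.ker (TΨ : ℓ² →ₗ[ℂ] H)) (ContinuousLinearMap.isClosed_ker TΨ)‖ < 1 := by
    rw [e1, e2]
    have e3 : (1 - orthProj M hMc) - (1 - orthProj N hNc) =
        orthProj N hNc - orthProj M hMc := by abel
    rw [e3, norm_sub_rev]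
    exact lt_of_le_of_lt hPMN hr1
  exact ⟨hlt, bijective_of_norm_lt (LinearMap.ker (TΦ : ℓ² →ₗ[ℂ] H)) (LinearMap.ker (TΨ : ℓ² →ₗ[ℂ] H))
    (ContinuousLinearMap.isClosed_ker TΦ) (ContinuousLinearMap.isClosed_ker TΨ) hlt⟩

end
end
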